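/- arXiv:2011.07879 — 5 statements merged into one kernel-verified Lean document; each statement's English description precedes it below -/
import Mathlib

section
/- Let A be a finite idempotent algebra. Suppose that for every pair of triples (s0, s1) ∈ (A² × {0,1})² there is a single ternary term of A that is a local difference term operation for both s0 and s1. Then for every subset S ⊆ A² × {0,1} there is a ternary term of A that is a local difference term operation for S. -/
open FirstOrder FirstOrder.Language FirstOrder.Language.Structure

/-- A congruence on an `L`-structure: an equivalence relation preserved by every
basic operation. -/
def IsCong (L : FirstOrder.Language) (A : Type*) [L.Structure A] (r : A → A → Prop) : Prop :=
  Equivalence r ∧ ∀ (n : ℕ) (f : L.Functions n) (x y : Fin n → A),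
    (∀ i, r (x i) (y i)) → r (funMap f x) (funMap f y)

/-- The congruence generated by a set of pairs: the intersection of all congruences
containing the set. -/
def cgSet (L : FirstOrder.Language) (A : Type*) [L.Structure A] (s : Set (A × A)) :
    A → A → Prop :=
  fun x y => ∀ r : A → A → Prop, IsCong L A r → (∀ p ∈ s, r p.1 p.2) → r x y

/-- `Cg^A(a,b)`: the least congruence containing `(a,b)`. -/
def cgPair (L : FirstOrder.Language) (A : Type*) [L.Structure A] (a b : A) : A → A → Prop :=
  cgSet L A {(a, b)}

/-- The term condition `C(α,β;δ)`. -/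
def TermCond (L : FirstOrder.Language) (A : Type*) [L.Structure A]
    (α β δ : A → A → Prop) : Prop :=
  ∀ (n : ℕ) (t : L.Term (Fin (n + 1))) (a a' : A), α a a' →
    ∀ u v : Fin n → A, (∀ i, β (u i) (v i)) →
      δ (t.realize (Fin.cons a u)) (t.realize (Fin.cons a v)) →
      δ (t.realize (Fin.cons a' u)) (t.realize (Fin.cons a' v))

/-- The commutator `[α,β]`: the least congruence `δ` such that `C(α,β;δ)` holds
(the intersection of all such `δ`). -/
def commut (L : FirstOrder.Language) (A : Type*) [L.Structure A] (α β : A → A → Prop) :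
    A → A → Prop :=
  fun x y => ∀ δ : A → A → Prop, IsCong L A δ → TermCond L A α β δ → δ x y

/-- An algebra is idempotent if every basic operation satisfies `f(a,…,a) = a`. -/
def IsIdem (L : FirstOrder.Language) (A : Type*) [L.Structure A] : Prop :=
  ∀ (n : ℕ) (f : L.Functions n) (a : A), funMap f (fun _ => a) = a

/-- A ternary term `d` is a difference term operation for `A` if `d(a,a,b) = b` and
`(a, d(a,b,b)) ∈ [θ,θ]` where `θ = Cg^A(a,b)`. -/
def IsDTO (L : FirstOrder.Language) (A : Type*) [L.Structure A] (d : L.Term (Fin 3)) : Prop :=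
  ∀ a b : A, d.realize ![a, a, b] = b ∧
    commut L A (cgPair L A a b) (cgPair L A a b) a (d.realize ![a, b, b])

/-- A local difference term operation for a triple `(a, b, i) ∈ A² × {0,1}`
(`i = 1` is encoded as `true`). -/
def IsLDTO (L : FirstOrder.Language) (A : Type*) [L.Structure A] (t : L.Term (Fin 3))
    (s : A × A × Bool) : Prop :=
  if s.2.2 then t.realize ![s.1, s.1, s.2.1] = s.2.1
  else commut L A (cgPair L A s.1 s.2.1) (cgPair L A s.1 s.2.1) s.1
    (t.realize ![s.1, s.2.1, s.2.1])

/-- The coordinatewise `L`-structure on a product. -/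
def prodStructure (L : FirstOrder.Language) (A B : Type*) [L.Structure A] [L.Structure B] :
    L.Structure (A × B) where
  funMap f x := (funMap f fun i => (x i).1, funMap f fun i => (x i).2)
  RelMap r x := RelMap r (fun i => (x i).1) ∧ RelMap r (fun i => (x i).2)

/-- The quotient structure on `Quotient s` induced by the structure on `A`. -/
noncomputable def quotStructure (L : FirstOrder.Language) (A : Type*) [L.Structure A] (s : Setoid A) :
    L.Structure (Quotient s) where
  funMap f x := ⟦funMap f fun i => (x i).out⟧
  RelMap r x := RelMap r fun i => (x i).out

namespace LDTOAux
open FirstOrder FirstOrder.Language FirstOrder.Language.Structure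

variable {L : FirstOrder.Language} {A : Type*} [L.Structure A]

lemma term_congr {r : A → A → Prop} (hr : IsCong L A r) {α : Type*} (t : L.Term α)
    {x y : α → A} (h : ∀ i, r (x i) (y i)) : r (t.realize x) (t.realize y) := by
  induction t with
  | var i => exact h i
  | func f ts ih =>
    simp only [Term.realize_func]
    exact hr.2 _ f _ _ fun i => ih i

lemma term_idem (hid : IsIdem L A) {α : Type*} (t : L.Term α) (a : A) :
    t.realize (fun _ => a) = a := by
  induction t with
  | var i => rfl
  | func f ts ih =>
    simp only [Term.realize_func]
    rw [show (fun i => (ts i).realize fun _ => a) = fun _ => a from funext ih]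
    exact hid _ f a

lemma realize_const3 (hid : IsIdem L A) (t : L.Term (Fin 3)) (a : A) :
    t.realize ![a, a, a] = a := by
  rw [show (![a, a, a] : Fin 3 → A) = fun _ => a from by funext i; fin_cases i <;> rfl]
  exact term_idem hid t a

lemma isCong_cgSet (s : Set (A × A)) : IsCong L A (cgSet L A s) := by
  refine ⟨⟨?_, ?_, ?_⟩, ?_⟩
  · intro x r hr _; exact hr.1.refl x
  · intro x y h r hr hs; exact hr.1.symm (h r hr hs)
  · intro x y z h1 h2 r hr hs; exact hr.1.trans (h1 r hr hs) (h2 r hr hs)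
  · intro n f x y h r hr hs; exact hr.2 n f x y fun i => h i r hr hs

lemma isCong_cgPair (a b : A) : IsCong L A (cgPair L A a b) := isCong_cgSet _

lemma isCong_commut (α β : A → A → Prop) : IsCong L A (commut L A α β) := by
  refine ⟨⟨?_, ?_, ?_⟩, ?_⟩
  · intro x δ hδ _; exact hδ.1.refl x
  · intro x y h δ hδ htc; exact hδ.1.symm (h δ hδ htc)
  · intro x y z h1 h2 δ hδ htc; exact hδ.1.trans (h1 δ hδ htc) (h2 δ hδ htc)
  · intro n f x y h δ hδ htc; exact hδ.2 n f x y fun i => h i δ hδ htc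

lemma cgPair_self (a b : A) : cgPair L A a b a b :=
  fun _ _ hs => hs (a, b) rfl

lemma cgPair_mono {a b c : A} (h : cgPair L A a b a c) {x y : A}
    (hxy : cgPair L A a c x y) : cgPair L A a b x y := by
  intro r hr hab
  refine hxy r hr fun p hp => ?_
  rw [Set.mem_singleton_iff] at hp
  subst hp
  exact h r hr hab

lemma commut_mono {α α' β β' : A → A → Prop} (hα : ∀ x y, α' x y → α x y)
    (hβ : ∀ x y, β' x y → β x y) {x y : A} (h : commut L A α' β' x y) :
    commut L A α β x y := by
  intro δ hδ htc
  exact h δ hδ fun n t a a' haa u v huv =>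
    htc n t a a' (hα _ _ haa) u v (fun i => hβ _ _ (huv i))

/-- `t(a,a,b) = b` : the "1-property" at `(a,b)`. -/
def Q1 (t : L.Term (Fin 3)) (a b : A) : Prop := t.realize ![a, a, b] = b

/-- `(a, t(a,b,b)) ∈ [θ,θ]`, `θ = Cg(a,b)` : the "0-property" at `(a,b)`. -/
def Q0 (t : L.Term (Fin 3)) (a b : A) : Prop :=
  commut L A (cgPair L A a b) (cgPair L A a b) a (t.realize ![a, b, b])

lemma isLDTO_true {t : L.Term (Fin 3)} {a b : A} :
    IsLDTO L A t (a, b, true) ↔ Q1 t a b := by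
  simp [IsLDTO, Q1]

lemma isLDTO_false {t : L.Term (Fin 3)} {a b : A} :
    IsLDTO L A t (a, b, false) ↔ Q0 t a b := by
  simp [IsLDTO, Q0]

/-- `(d ⋆ e)(x,y,z) = d(e(x,y,z), e(y,y,z), z)`. -/
def star (d e : L.Term (Fin 3)) : L.Term (Fin 3) :=
  d.subst ![e, e.relabel ![1, 1, 2], Term.var 2]

lemma star_realize (d e : L.Term (Fin 3)) (x y z : A) :
    (star d e).realize ![x, y, z] =
      d.realize ![e.realize ![x, y, z], e.realize ![y, y, z], z] := by
  rw [star, Term.realize_subst]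
  congr 1
  funext i
  fin_cases i
  · rfl
  · show (e.relabel ![1, 1, 2]).realize ![x, y, z] = e.realize ![y, y, z]
    rw [Term.realize_relabel]
    congr 1
    funext j; fin_cases j <;> rfl
  · rfl

/-- `(d • e)(x,y,z) = d(x, e(x,y,y), e(x,y,z))`. -/
def bullet (d e : L.Term (Fin 3)) : L.Term (Fin 3) :=
  d.subst ![Term.var 0, e.relabel ![0, 1, 1], e]

lemma bullet_realize (d e : L.Term (Fin 3)) (x y z : A) :
    (bullet d e).realize ![x, y, z] =
      d.realize ![x, e.realize ![x, y, y], e.realize ![x, y, z] ] := by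
  rw [bullet, Term.realize_subst]
  congr 1
  funext i
  fin_cases i
  · rfl
  · show (e.relabel ![0, 1, 1]).realize ![x, y, z] = e.realize ![x, y, y]
    rw [Term.realize_relabel]
    congr 1
    funext j; fin_cases j <;> rfl
  · rfl

lemma S1 (hid : IsIdem L A) {e : L.Term (Fin 3)} {a b : A} (h : Q1 e a b)
    (d : L.Term (Fin 3)) : Q1 (star d e) a b := by
  unfold Q1 at *
  rw [star_realize, h]
  exact realize_const3 hid d b

lemma S2 {d e : L.Term (Fin 3)} {a b : A} (h : Q1 d (e.realize ![a, a, b]) b) :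
    Q1 (star d e) a b := by
  unfold Q1 at *
  rw [star_realize]
  exact h

lemma S3 (hid : IsIdem L A) {d e : L.Term (Fin 3)} {a b : A}
    (hd : Q0 d a b) (he : Q0 e a b) : Q0 (star d e) a b := by
  unfold Q0 at *
  rw [star_realize, realize_const3 hid e b]
  have hκ := isCong_commut (L := L) (A := A) (cgPair L A a b) (cgPair L A a b)
  have h1 := term_congr hκ d (x := ![a, b, b]) (y := ![e.realize ![a, b, b], b, b])
    (by intro i; fin_cases i
        · exact he
        · exact hκ.1.refl b
        · exact hκ.1.refl b)
  exact hκ.1.trans hd h1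

lemma B1 (hid : IsIdem L A) {d e : L.Term (Fin 3)} {a b : A}
    (hd : Q1 d a b) (he : Q1 e a b) : Q1 (bullet d e) a b := by
  unfold Q1 at *
  rw [bullet_realize, realize_const3 hid e a, he]
  exact hd

lemma B2 (hid : IsIdem L A) {e : L.Term (Fin 3)} {a b : A} (he : Q0 e a b)
    (d : L.Term (Fin 3)) : Q0 (bullet d e) a b := by
  unfold Q0 at *
  rw [bullet_realize]
  have hκ := isCong_commut (L := L) (A := A) (cgPair L A a b) (cgPair L A a b)
  have h1 := term_congr hκ d (x := ![a, e.realize ![a, b, b], e.realize ![a, b, b] ])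
    (y := ![a, a, a])
    (by intro i; fin_cases i
        · exact hκ.1.refl a
        · exact hκ.1.symm he
        · exact hκ.1.symm he)
  rw [realize_const3 hid d a] at h1
  exact hκ.1.symm h1

lemma B3 (hid : IsIdem L A) {d e : L.Term (Fin 3)} {a b : A}
    (hd : Q0 d a (e.realize ![a, b, b])) : Q0 (bullet d e) a b := by
  unfold Q0 at *
  rw [bullet_realize]
  have hac : cgPair L A a b a (e.realize ![a, b, b]) := by
    have h := term_congr (isCong_cgPair (L := L) a b) e (x := ![a, a, a]) (y := ![a, b, b])
      (by intro i; fin_cases i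
          · exact (isCong_cgPair (L := L) a b).1.refl a
          · exact cgPair_self a b
          · exact cgPair_self a b)
    rwa [realize_const3 hid e a] at h
  exact commut_mono (fun x y => cgPair_mono hac) (fun x y => cgPair_mono hac) hd

lemma phaseA [Finite A] (hid : IsIdem L A)
    (hp : ∀ s₀ s₁ : A × A × Bool, ∃ t : L.Term (Fin 3), IsLDTO L A t s₀ ∧ IsLDTO L A t s₁)
    (s₀ : A × A × Bool) :
    ∃ p : L.Term (Fin 3), IsLDTO L A p s₀ ∧ ∀ a b : A, Q1 p a b := by
  have key : ∀ F : Set (A × A), F.Finite →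
      ∃ p : L.Term (Fin 3), IsLDTO L A p s₀ ∧ ∀ q ∈ F, Q1 p q.1 q.2 := by
    intro F hF
    refine Set.Finite.induction_on (motive := fun F _ =>
      ∃ p : L.Term (Fin 3), IsLDTO L A p s₀ ∧ ∀ q ∈ F, Q1 p q.1 q.2) F hF ?_ ?_
    · obtain ⟨t, ht, -⟩ := hp s₀ s₀
      exact ⟨t, ht, fun q hq => absurd hq (Set.notMem_empty q)⟩
    · rintro ⟨a, b⟩ F - - ⟨p, hps, hpF⟩
      obtain ⟨d, hd1, hds⟩ := hp (p.realize ![a, a, b], b, true) s₀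
      rw [isLDTO_true] at hd1
      refine ⟨star d p, ?_, ?_⟩
      · obtain ⟨x, y, i⟩ := s₀
        cases i
        · rw [isLDTO_false] at *
          exact S3 hid hds hps
        · rw [isLDTO_true] at *
          exact S1 hid hps d
      · rintro q hq
        rcases Set.mem_insert_iff.mp hq with rfl | hq
        · exact S2 hd1
        · exact S1 hid (hpF _ hq) d
  obtain ⟨p, h1, h2⟩ := key Set.univ Set.finite_univ
  exact ⟨p, h1, fun a b => h2 (a, b) trivial⟩

lemma phaseB [Finite A] [Nonempty A] (hid : IsIdem L A)
    (hp : ∀ s₀ s₁ : A × A × Bool, ∃ t : L.Term (Fin 3), IsLDTO L A t s₀ ∧ IsLDTO L A t s₁) :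
    ∃ p : L.Term (Fin 3), (∀ a b : A, Q1 p a b) ∧ ∀ a b : A, Q0 p a b := by
  obtain ⟨a₀⟩ := ‹Nonempty A›
  have key : ∀ F : Set (A × A), F.Finite →
      ∃ p : L.Term (Fin 3), (∀ a b : A, Q1 p a b) ∧ ∀ q ∈ F, Q0 p q.1 q.2 := by
    intro F hF
    refine Set.Finite.induction_on (motive := fun F _ =>
      ∃ p : L.Term (Fin 3), (∀ a b : A, Q1 p a b) ∧ ∀ q ∈ F, Q0 p q.1 q.2) F hF ?_ ?_
    · obtain ⟨p, -, h⟩ := phaseA hid hp (a₀, a₀, true)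
      exact ⟨p, h, fun q hq => absurd hq (Set.notMem_empty q)⟩
    · rintro ⟨a, b⟩ F - - ⟨e, he1, heF⟩
      obtain ⟨p, hp0, hp1⟩ := phaseA hid hp (a, e.realize ![a, b, b], false)
      rw [isLDTO_false] at hp0
      refine ⟨bullet p e, fun x y => B1 hid (hp1 x y) (he1 x y), ?_⟩
      rintro q hq
      rcases Set.mem_insert_iff.mp hq with rfl | hq
      · exact B3 hid hp0
      · exact B2 hid (heF _ hq) p
  obtain ⟨p, h1, h2⟩ := key Set.univ Set.finite_univ
  exact ⟨p, h1, fun a b => h2 (a, b) trivial⟩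

end LDTOAux

theorem stmt0 {L : FirstOrder.Language} [L.IsAlgebraic] (A : Type*) [L.Structure A] [Finite A]
    (hidem : IsIdem L A)
    (hpairs : ∀ s₀ s₁ : A × A × Bool,
      ∃ t : L.Term (Fin 3), IsLDTO L A t s₀ ∧ IsLDTO L A t s₁) :
    ∀ S : Set (A × A × Bool), ∃ t : L.Term (Fin 3), ∀ s ∈ S, IsLDTO L A t s := by
  intro S
  cases isEmpty_or_nonempty A with
  | inl h => exact ⟨FirstOrder.Language.Term.var 0, fun s _ => (IsEmpty.false s.1).elim⟩
  | inr h =>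
    obtain ⟨p, h1, h0⟩ := LDTOAux.phaseB hidem hpairs
    refine ⟨p, ?_⟩
    rintro ⟨a, b, i⟩ -
    cases i
    · exact LDTOAux.isLDTO_false.mpr (h0 a b)
    · exact LDTOAux.isLDTO_true.mpr (h1 a b)
end

section
/- Let A be a finite idempotent algebra, let a, b, a', b' ∈ A, and set δ = [Cg^A(a,b), Cg^A(a,b)]. Then there exists a ternary term of A that is a local difference term operation for both (a,b,0) and (a',b',1) if and only if the subalgebra of A × A generated by {(a,a'), (b,a'), (b,b')} contains an element of (a/δ) × {b'}, where a/δ denotes the δ-class of a. -/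
open FirstOrder FirstOrder.Language FirstOrder.Language.Structure

lemma prod_realize {L : FirstOrder.Language} {A B : Type*} [L.Structure A] [L.Structure B]
    {α : Type*} (t : L.Term α) (v : α → A × B) :
    (letI := prodStructure L A B; t.realize v) =
      (t.realize (fun i => (v i).1), t.realize (fun i => (v i).2)) := by
  letI := prodStructure L A B
  induction t with
  | var => rfl
  | func f ts ih =>
      simp only [Term.realize, prodStructure, ih]
      rfl

theorem stmt4 {L : FirstOrder.Language} [L.IsAlgebraic] (A : Type*) [L.Structure A] [Finite A]
    (hidem : IsIdem L A) (a b a' b' : A) :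
    letI : L.Structure (A × A) := prodStructure L A A
    ((∃ t : L.Term (Fin 3), IsLDTO L A t (a, b, false) ∧ IsLDTO L A t (a', b', true)) ↔
      ∃ u : A × A, u ∈ Substructure.closure L {(a, a'), (b, a'), (b, b')} ∧
        u ∈ ({x | commut L A (cgPair L A a b) (cgPair L A a b) a x} ×ˢ {b'} : Set (A × A))) := by
  letI : L.Structure (A × A) := prodStructure L A A
  have hfst : (fun i => ((![(a,a'),(b,a'),(b,b')] : Fin 3 → A × A) i).1) = ![a, b, b] := by
    funext i; fin_cases i <;> rfl
  have hsnd : (fun i => ((![(a,a'),(b,a'),(b,b')] : Fin 3 → A × A) i).2) = ![a', a', b'] := by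
    funext i; fin_cases i <;> rfl
  constructor
  · rintro ⟨t, h0, h1⟩
    refine ⟨t.realize ![(a,a'),(b,a'),(b,b')], ?_, ?_⟩
    · exact t.realize_mem _ (fun i => by
        fin_cases i <;> apply Substructure.subset_closure <;> simp)
    · have key := prod_realize (A := A) (B := A) t ![(a,a'),(b,a'),(b,b')]
      rw [hfst, hsnd] at key
      rw [key]
      constructor
      · simpa [IsLDTO] using h0
      · simpa [IsLDTO] using h1
  · rintro ⟨u, hu, hmem⟩
    obtain ⟨hu1, hu2⟩ := hmem
    simp only [Set.mem_singleton_iff] at hu2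
    rw [Substructure.mem_closure_iff_exists_term] at hu
    obtain ⟨t', rfl⟩ := hu
    classical
    let g : ({(a,a'), (b,a'), (b,b')} : Set (A × A)) → Fin 3 := fun x =>
      if (x : A × A) = (a,a') then 0 else if (x : A × A) = (b,a') then 1 else 2
    have hg : ∀ x : ({(a,a'), (b,a'), (b,b')} : Set (A × A)),
        (![(a,a'),(b,a'),(b,b')] : Fin 3 → A × A) (g x) = (x : A × A) := by
      rintro ⟨x, hx⟩
      simp only [g]
      split_ifs with h1 h2
      · simp [h1]
      · simp [h2]
      · simp only [Set.mem_insert_iff, Set.mem_singleton_iff] at hx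
        rcases hx with h | h | h
        · exact absurd h h1
        · exact absurd h h2
        · simp [h]
    have key := prod_realize (A := A) (B := A) (t'.relabel g) ![(a,a'),(b,a'),(b,b')]
    rw [hfst, hsnd] at key
    have hre : Term.realize (M := A × A) ![(a,a'),(b,a'),(b,b')] (t'.relabel g) =
        t'.realize ((↑) : _ → A × A) := by
      rw [Term.realize_relabel]
      congr 1
      funext x
      exact hg x
    rw [hre] at key
    have k1 : Term.realize ![a, b, b] (t'.relabel g) = (t'.realize ((↑) : _ → A × A)).1 :=
      (congrArg Prod.fst key).symm
    have k2 : Term.realize ![a', a', b'] (t'.relabel g) = (t'.realize ((↑) : _ → A × A)).2 :=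
      (congrArg Prod.snd key).symm
    refine ⟨t'.relabel g, ?_, ?_⟩
    · simp only [IsLDTO, if_neg (by simp : ¬(false = true))]
      rw [k1]
      exact hu1
    · simp only [IsLDTO, if_pos rfl]
      rw [k2, hu2]; simp
end

section
/- Let A be an idempotent algebra, let S' ⊆ A² × {0,1}, and let (a,b) ∈ A². Suppose p is a ternary term that is a local difference term operation for S', and q is a ternary term that is a local difference term operation for the set {(x,y,1) : (x,y,1) ∈ S'} ∪ {(a, p^A(a,b,b), 0)}. Then the ternary term d(x,y,z) := q(x, p(x,y,y), p(x,y,z)) is a local difference term operation for S' ∪ {(a,b,0)}. -/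
open FirstOrder FirstOrder.Language FirstOrder.Language.Structure

section Aux
variable {L : FirstOrder.Language} {A : Type*} [L.Structure A]
open FirstOrder FirstOrder.Language FirstOrder.Language.Structure

lemma term_idem (h : IsIdem L A) {ι : Type*} (t : L.Term ι) (v : ι → A) (a : A)
    (hv : ∀ i, v i = a) : t.realize v = a := by
  induction t with
  | var i => exact hv i
  | func f ts ih =>
    simp only [Term.realize]
    rw [show (fun i => (ts i).realize v) = fun _ => a from funext fun i => ih i]
    exact h _ f a

lemma term_cong {r : A → A → Prop} (hr : IsCong L A r) {ι : Type*} (t : L.Term ι)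
    (u v : ι → A) (huv : ∀ i, r (u i) (v i)) : r (t.realize u) (t.realize v) := by
  induction t with
  | var i => exact huv i
  | func f ts ih => exact hr.2 _ f _ _ fun i => ih i

lemma d_realize (p q : L.Term (Fin 3)) (x y z : A) :
    (q.subst ![Term.var 0, p.subst ![Term.var 0, Term.var 1, Term.var 1],
      (p.subst ![Term.var 0, Term.var 1, Term.var 2])]).realize ![x, y, z]
    = q.realize ![x, p.realize ![x, y, y], (p.realize ![x, y, z])] := by
  rw [Term.realize_subst]
  congr 1
  funext i
  fin_cases i <;>
    simp [Term.realize_subst] <;> congr 1 <;> funext j <;> fin_cases j <;> simp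

end Aux

theorem stmt6 {L : FirstOrder.Language} [L.IsAlgebraic] (A : Type*) [L.Structure A]
    (hidem : IsIdem L A) (S' : Set (A × A × Bool)) (a b : A) (p q : L.Term (Fin 3))
    (hp : ∀ s ∈ S', IsLDTO L A p s)
    (hq : ∀ s ∈ ({s : A × A × Bool | s ∈ S' ∧ s.2.2 = true} ∪
        {(a, p.realize ![a, b, b], false)} : Set (A × A × Bool)),
      IsLDTO L A q s) :
    ∀ s ∈ S' ∪ {(a, b, false)},
      IsLDTO L A
        (q.subst ![Term.var 0, p.subst ![Term.var 0, Term.var 1, Term.var 1],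
          (p.subst ![Term.var 0, Term.var 1, Term.var 2])]) s := by
  classical
  intro s hs
  rcases hs with hs | hs
  · obtain ⟨x, y, i⟩ := s
    cases i with
    | true =>
      have hp' := hp _ hs
      have hq' := hq _ (Or.inl ⟨hs, rfl⟩)
      simp only [IsLDTO, if_true] at hp' hq' ⊢
      rw [d_realize]
      have hxxx : p.realize ![x, x, x] = x :=
        term_idem hidem _ _ x (by intro i; fin_cases i <;> rfl)
      rw [hxxx, hp', hq']
    | false =>
      have hp' := hp _ hs
      simp only [IsLDTO, Bool.false_eq_true, if_false] at hp' ⊢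
      intro δ hδ hTC
      have hxc : δ x (p.realize ![x, y, y]) := hp' δ hδ hTC
      rw [d_realize]
      have h1 : δ (q.realize (fun _ => x))
          (q.realize ![x, p.realize ![x, y, y], (p.realize ![x, y, y])]) := by
        refine term_cong hδ q _ _ ?_
        intro i
        fin_cases i
        · exact hδ.1.refl x
        · exact hxc
        · exact hxc
      rwa [term_idem hidem q _ x fun _ => rfl] at h1
  · rw [Set.mem_singleton_iff] at hs; subst hs
    have hq' := hq _ (Or.inr rfl)
    simp only [IsLDTO, Bool.false_eq_true, if_false] at hq' ⊢
    intro δ hδ hTC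
    have hsub : ∀ u v : A, cgPair L A a (p.realize ![a, b, b]) u v → cgPair L A a b u v := by
      intro u v h r hr hrab
      refine h r hr ?_
      intro pp hpp
      rw [Set.mem_singleton_iff] at hpp; subst hpp
      have h2 : r (p.realize (fun _ => a)) (p.realize ![a, b, b]) := by
        refine term_cong hr p _ _ ?_
        intro i
        fin_cases i
        · exact hr.1.refl a
        · exact hrab (a, b) rfl
        · exact hrab (a, b) rfl
      rwa [term_idem hidem p _ a fun _ => rfl] at h2
    have hTC' : TermCond L A (cgPair L A a (p.realize ![a, b, b]))
        (cgPair L A a (p.realize ![a, b, b])) δ := by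
      intro n t x x' hxx' u v huv
      exact hTC n t x x' (hsub _ _ hxx') u v fun i => hsub _ _ (huv i)
    have h3 := hq' δ hδ hTC'
    rw [d_realize]
    exact h3
end

section
/- Let A be an idempotent algebra, let S' ⊆ A² × {0,1}, and let (a,b) ∈ A². Suppose p is a ternary term that is a local difference term operation for S', and q is a ternary term that is a local difference term operation for the set {(x,y,0) : (x,y,0) ∈ S'} ∪ {(p^A(a,a,b), b, 1)}. Then the ternary term d(x,y,z) := q(p(x,y,z), p(y,y,z), z) is a local difference term operation for S' ∪ {(a,b,1)}. -/
open FirstOrder FirstOrder.Language FirstOrder.Language.Structure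

lemma term_idem_s7 {L : FirstOrder.Language} {A : Type*} [L.Structure A] (hidem : IsIdem L A)
    {α : Type*} (t : L.Term α) (c : A) : t.realize (fun _ => c) = c := by
  induction t with
  | var => rfl
  | func f ts ih =>
    have : (fun i => (ts i).realize (fun _ => c)) = fun _ => c := funext fun i => ih i
    simp only [Term.realize, this]
    exact hidem _ f c

lemma cong_term {L : FirstOrder.Language} {A : Type*} [L.Structure A]
    {r : A → A → Prop} (hr : IsCong L A r) {α : Type*} (t : L.Term α)
    (x y : α → A) (h : ∀ i, r (x i) (y i)) : r (t.realize x) (t.realize y) := by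
  induction t with
  | var i => exact h i
  | func f ts ih => exact hr.2 _ f _ _ fun i => ih i

lemma commut_cong {L : FirstOrder.Language} {A : Type*} [L.Structure A]
    (α β : A → A → Prop) : IsCong L A (commut L A α β) := by
  refine ⟨⟨fun x δ hδ _ => hδ.1.refl x,
    fun h δ hδ ht => hδ.1.symm (h δ hδ ht),
    fun h1 h2 δ hδ ht => hδ.1.trans (h1 δ hδ ht) (h2 δ hδ ht)⟩,
    fun n f x y h δ hδ ht => hδ.2 n f x y fun i => h i δ hδ ht⟩

theorem stmt7 {L : FirstOrder.Language} [L.IsAlgebraic] (A : Type*) [L.Structure A]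
    (hidem : IsIdem L A) (S' : Set (A × A × Bool)) (a b : A) (p q : L.Term (Fin 3))
    (hp : ∀ s ∈ S', IsLDTO L A p s)
    (hq : ∀ s ∈ ({s : A × A × Bool | s ∈ S' ∧ s.2.2 = false} ∪
        {(p.realize ![a, a, b], b, true)} : Set (A × A × Bool)),
      IsLDTO L A q s) :
    ∀ s ∈ S' ∪ {(a, b, true)},
      IsLDTO L A
        (q.subst ![p.subst ![Term.var 0, Term.var 1, Term.var 2],
          p.subst ![Term.var 1, Term.var 1, Term.var 2], Term.var 2]) s := by
  set d := (q.subst ![p.subst ![Term.var 0, Term.var 1, Term.var 2],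
      p.subst ![Term.var 1, Term.var 1, Term.var 2], Term.var 2] : L.Term (Fin 3)) with hdd
  have hd : ∀ x y z : A,
      d.realize ![x, y, z] = q.realize ![p.realize ![x, y, z], p.realize ![y, y, z], z] := by
    intro x y z
    rw [hdd, Term.realize_subst]
    refine congrArg (fun w => Term.realize w q) ?_
    funext i
    fin_cases i
    · show Term.realize ![x, y, z] (p.subst ![Term.var 0, Term.var 1, Term.var 2]) = _
      rw [Term.realize_subst]
      refine congrArg (fun w => Term.realize w p) ?_
      funext j; fin_cases j <;> rfl
    · show Term.realize ![x, y, z] (p.subst ![Term.var 1, Term.var 1, Term.var 2]) = _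
      rw [Term.realize_subst]
      refine congrArg (fun w => Term.realize w p) ?_
      funext j; fin_cases j <;> rfl
    · rfl
  intro s hs
  rcases hs with hs | hs
  · rcases s with ⟨x, y, i⟩
    cases i with
    | true =>
      have hpx : p.realize ![x, x, y] = y := by simpa [IsLDTO] using hp _ hs
      simp only [IsLDTO, if_true]
      rw [hd x x y, hpx]
      have hyyy : (![y, y, y] : Fin 3 → A) = fun _ => y := by
        funext j; fin_cases j <;> rfl
      rw [hyyy]
      exact term_idem_s7 hidem q y
    | false =>
      have hpx : commut L A (cgPair L A x y) (cgPair L A x y) x (p.realize ![x, y, y]) := by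
        simpa [IsLDTO] using hp _ hs
      have hqx : commut L A (cgPair L A x y) (cgPair L A x y) x (q.realize ![x, y, y]) := by
        simpa [IsLDTO] using hq _ (Or.inl ⟨hs, rfl⟩)
      simp only [IsLDTO, if_neg Bool.false_ne_true]
      rw [hd x y y]
      have hyyy : (![y, y, y] : Fin 3 → A) = fun _ => y := by
        funext j; fin_cases j <;> rfl
      rw [hyyy, term_idem_s7 hidem p y]
      set c := commut L A (cgPair L A x y) (cgPair L A x y) with hc'
      have hc : IsCong L A c := commut_cong _ _
      have step : c (q.realize ![x, y, y]) (q.realize ![p.realize ![x, y, y], y, y]) := by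
        apply cong_term hc q
        intro j
        fin_cases j
        · exact hpx
        · exact hc.1.refl y
        · exact hc.1.refl y
      exact hc.1.trans hqx step
  · rcases hs with rfl
    simp only [IsLDTO, if_true]
    rw [hd a a b]
    have := hq _ (Or.inr rfl)
    simpa [IsLDTO] using this
end

section
/- Let A be a finite idempotent algebra such that every subalgebra of A generated by two elements has a difference term operation. Then no member of HS(A) is a two-element algebra all of whose term operations are projections; that is, there do not exist a subalgebra B of A and a congruence γ of B such that the quotient B/γ has exactly two elements and every term operation of B/γ is a projection operation. -/
open FirstOrder FirstOrder.Language FirstOrder.Language.Structure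

theorem realize_quot_aux {L : FirstOrder.Language} {B : Type*} [L.Structure B] (s : Setoid B)
    (hcong : ∀ (n : ℕ) (f : L.Functions n) (x y : Fin n → B),
      (∀ i, s.r (x i) (y i)) → s.r (funMap f x) (funMap f y))
    {α : Type*} (t : L.Term α) (v : α → B) :
    (letI := quotStructure L B s
     t.realize (fun i => Quotient.mk s (v i))) = Quotient.mk s (t.realize v) := by
  letI := quotStructure L B s
  induction t with
  | var i => rfl
  | func f ts ih =>
    calc Term.realize (fun i => Quotient.mk s (v i)) (Term.func f ts)
        = Quotient.mk s (funMap f fun i =>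
            (Term.realize (fun j => Quotient.mk s (v j)) (ts i)).out) := rfl
      _ = Quotient.mk s (funMap f fun i => (Quotient.mk s ((ts i).realize v)).out) := by
          simp only [ih]
      _ = Quotient.mk s (funMap f fun i => ((ts i).realize v)) :=
          Quotient.sound (hcong _ f _ _ fun i => Quotient.mk_out _)

theorem stmt12 {L : FirstOrder.Language} [L.IsAlgebraic] (A : Type*) [L.Structure A] [Finite A]
    (hidem : IsIdem L A)
    (h2gen : ∀ a b : A, ∃ d : L.Term (Fin 3),
      IsDTO L (↥(Substructure.closure L {a, b} : L.Substructure A)) d) :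
    ¬ ∃ (B : L.Substructure A) (γ : ↥B → ↥B → Prop) (hγ : IsCong L (↥B) γ),
      letI : L.Structure (Quotient (Setoid.mk γ hγ.1)) := quotStructure L (↥B) (Setoid.mk γ hγ.1)
      Nat.card (Quotient (Setoid.mk γ hγ.1)) = 2 ∧
        ∀ (n : ℕ) (t : L.Term (Fin n)), ∃ i : Fin n,
          ∀ v : Fin n → Quotient (Setoid.mk γ hγ.1), t.realize v = v i := by
  rintro ⟨B, γ, hγ, hcard, hproj⟩
  set s : Setoid ↥B := Setoid.mk γ hγ.1 with hs
  letI : L.Structure (Quotient s) := quotStructure L (↥B) s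
  obtain ⟨p, q, hpq, -⟩ := Nat.card_eq_two_iff.mp hcard
  set x : ↥B := p.out with hx
  set y : ↥B := q.out with hy
  obtain ⟨d, hd⟩ := h2gen (↑x) (↑y)
  set C : L.Substructure A := Substructure.closure L {(x : A), (y : A)} with hC
  have hCB : C ≤ B := (Substructure.closure_le).mpr (by
    rintro z (rfl | rfl)
    · exact x.2
    · exact y.2)
  have hxC : (x : A) ∈ C := Substructure.subset_closure (by left; rfl)
  have hyC : (y : A) ∈ C := Substructure.subset_closure (by right; rfl)
  set Φ : ↥C → Quotient s := fun c => Quotient.mk s ⟨(c : A), hCB c.2⟩ with hΦ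
  have key : ∀ {n : ℕ} (t : L.Term (Fin n)) (v : Fin n → ↥C),
      Φ (t.realize v) = t.realize (fun i => Φ (v i)) := by
    intro n t v
    have h2 : (⟨((t.realize v : ↥C) : A), hCB (t.realize v).2⟩ : ↥B)
        = t.realize (fun i => (⟨((v i : A)), hCB (v i).2⟩ : ↥B)) := by
      apply Subtype.ext
      have hB := realize_term_substructure (M := A)
        (fun i => (⟨((v i : A)), hCB (v i).2⟩ : ↥B)) t
      have hC' := realize_term_substructure (M := A) v t
      rw [← hB, ← hC']
      rfl
    calc Φ (t.realize v)
        = Quotient.mk s (t.realize (fun i => (⟨(v i : A), hCB (v i).2⟩ : ↥B))) := by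
          rw [hΦ]; exact congrArg _ h2
      _ = t.realize (fun i => Φ (v i)) :=
          (realize_quot_aux s hγ.2 t _).symm
  set x' : ↥C := ⟨(x : A), hxC⟩ with hx'
  set y' : ↥C := ⟨(y : A), hyC⟩ with hy'
  have hΦx : Φ x' = p := by
    show Quotient.mk s ⟨(x : A), _⟩ = p
    have h : (⟨(x : A), hCB x'.2⟩ : ↥B) = x := Subtype.ext rfl
    rw [h, hx]
    exact Quotient.out_eq p
  have hΦy : Φ y' = q := by
    show Quotient.mk s ⟨(y : A), _⟩ = q
    have h : (⟨(y : A), hCB y'.2⟩ : ↥B) = y := Subtype.ext rfl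
    rw [h, hy]
    exact Quotient.out_eq q
  obtain ⟨hd1, hd2⟩ := hd x' y'
  obtain ⟨i, hi⟩ := hproj 3 d
  have hqd : q = d.realize (fun j => Φ (![x', x', y'] j)) := by
    rw [← key d ![x', x', y'], hd1, hΦy]
  rw [hi] at hqd
  have hΦfun : ∀ (n : ℕ) (f : L.Functions n) (w : Fin n → ↥C),
      Φ (funMap f w) = funMap f (fun j => Φ (w j)) := by
    intro n f w
    exact key (Term.func f Term.var) w
  have hcongδ : IsCong L (↥C) (fun c c' => Φ c = Φ c') := by
    refine ⟨⟨fun _ => rfl, fun h => h.symm, fun h1 h2 => h1.trans h2⟩, ?_⟩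
    intro n f xw yw h
    rw [hΦfun, hΦfun]
    exact congrArg _ (funext h)
  have htc : TermCond L (↥C) (cgPair L (↥C) x' y') (cgPair L (↥C) x' y')
      (fun c c' => Φ c = Φ c') := by
    intro n t a a' _ u v _ hδ
    obtain ⟨j, hj⟩ := hproj (n + 1) t
    rw [key, key] at hδ ⊢
    rw [hj, hj] at hδ ⊢
    induction j using Fin.cases with
    | zero => simp only [Fin.cons_zero]
    | succ k =>
      simp only [Fin.cons_succ] at hδ ⊢
      exact hδ
  have hpd : p = Φ (d.realize ![x', y', y']) := by
    rw [← hΦx]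
    exact hd2 _ hcongδ htc
  rw [key d ![x', y', y'], hi] at hpd
  apply hpq
  have hi3 : i = 0 ∨ i = 1 ∨ i = 2 := by omega
  rcases hi3 with rfl | rfl | rfl <;>
    simp only [Matrix.cons_val_zero, Matrix.cons_val_one, Matrix.head_cons,
      Matrix.cons_val_two, Matrix.tail_cons, hΦx, hΦy] at hqd hpd <;>
    first
      | exact hqd.symm
      | exact hpd
end
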